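/- arXiv:2412.09767 — 5 statements merged into one kernel-verified Lean document; each statement's English description precedes it below -/
import Mathlib

section
/- Let (X,d) be a complete metric space and (f_n) a sequence of self-maps of X such that μ := sup_n Lip(f_n) < 1. Suppose there exists x_0 ∈ X such that the sequence (d(f_n(x_0), x_0)) is bounded. Then there exists x* ∈ X such that for every x ∈ X, the sequence f_1 ∘ f_2 ∘ ⋯ ∘ f_n(x) converges to x* as n → ∞. -/
open Filter
open scoped NNReal

/-- `seqComp f k m x = f k (f (k+1) (⋯ (f (k+m-1) x)))`: the composition of the
`m` maps `f k, …, f (k+m-1)`, applying the one with largest index first. -/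
def seqComp {X : Type*} (f : ℕ → X → X) : ℕ → ℕ → X → X
  | _, 0, x => x
  | k, m + 1, x => f k (seqComp f (k + 1) m x)

lemma seqComp_succ_right {X : Type*} (f : ℕ → X → X) (k m : ℕ) (x : X) :
    seqComp f k (m + 1) x = seqComp f k m (f (k + m) x) := by
  induction m generalizing k with
  | zero => simp [seqComp]
  | succ m ih =>
      show f k (seqComp f (k+1) (m+1) x) = _
      rw [ih (k+1)]
      show seqComp f k (m+1) (f (k + 1 + m) x) = _
      congr 2
      omega

lemma seqComp_lipschitz {X : Type*} [MetricSpace X] (f : ℕ → X → X) (μ : ℝ≥0)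
    (hf : ∀ n, LipschitzWith μ (f n)) (k m : ℕ) :
    LipschitzWith (μ ^ m) (seqComp f k m) := by
  induction m generalizing k with
  | zero => rw [pow_zero]; exact LipschitzWith.id
  | succ m ih =>
      have : LipschitzWith (μ * μ ^ m) (f k ∘ seqComp f (k+1) m) :=
        (hf k).comp (ih (k+1))
      have e : seqComp f k (m+1) = f k ∘ seqComp f (k+1) m := funext fun x => rfl
      rw [e]
      simpa [pow_succ, mul_comm, Function.comp] using this

/-- Non-stationary contraction mapping principle. -/
theorem nonstationary_contraction {X : Type*} [MetricSpace X] [CompleteSpace X]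
    (f : ℕ → X → X) (μ : ℝ≥0) (hμ : μ < 1) (hf : ∀ n, LipschitzWith μ (f n))
    (x₀ : X) (hb : ∃ M : ℝ, ∀ n, dist (f n x₀) x₀ ≤ M) :
    ∃ xs : X, ∀ x : X,
      Tendsto (fun n => seqComp f 1 n x) atTop (nhds xs) := by
  obtain ⟨M, hM⟩ := hb
  have hμR : (μ : ℝ) < 1 := by exact_mod_cast hμ
  have hμ0 : (0:ℝ) ≤ μ := μ.coe_nonneg
  have hkey : ∀ n, dist (seqComp f 1 n x₀) (seqComp f 1 (n+1) x₀) ≤ M * (μ:ℝ) ^ n := by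
    intro n
    rw [seqComp_succ_right, dist_comm]
    calc dist (seqComp f 1 n (f (1 + n) x₀)) (seqComp f 1 n x₀)
        ≤ (μ ^ n : ℝ≥0) * dist (f (1 + n) x₀) x₀ :=
          (seqComp_lipschitz f μ hf 1 n).dist_le_mul _ _
      _ ≤ (μ:ℝ) ^ n * M := by
          push_cast
          exact mul_le_mul_of_nonneg_left (hM _) (by positivity)
      _ = M * (μ:ℝ) ^ n := mul_comm _ _
  have hcauchy : CauchySeq (fun n => seqComp f 1 n x₀) :=
    cauchySeq_of_le_geometric (μ : ℝ) M hμR hkey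
  obtain ⟨xs, hxs⟩ := cauchySeq_tendsto_of_complete hcauchy
  refine ⟨xs, fun x => ?_⟩
  have hd : Tendsto (fun n => dist (seqComp f 1 n x₀) (seqComp f 1 n x)) atTop (nhds 0) := by
    have h1 : Tendsto (fun n : ℕ => (μ:ℝ) ^ n * dist x₀ x) atTop (nhds 0) := by
      simpa using (tendsto_pow_atTop_nhds_zero_of_lt_one hμ0 hμR).mul_const (dist x₀ x)
    refine squeeze_zero (fun n => dist_nonneg) (fun n => ?_) h1
    have := (seqComp_lipschitz f μ hf 1 n).dist_le_mul x₀ x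
    push_cast at this
    exact this
  exact hxs.congr_dist hd
end

section
/- Define f_n : ℝ → ℝ by f_n(x) = (1/2)x + 3^n. Then each f_n is a contraction with Lipschitz constant 1/2, but f_1 ∘ f_2 ∘ ⋯ ∘ f_n(0) = Σ_{i=1}^n 3^i/2^{i-1} → ∞ as n → ∞; hence the sequence (f_1∘⋯∘f_n(0)) does not converge. -/
open Filter
open scoped NNReal

lemma seqComp_formula (f : ℕ → ℝ → ℝ) (hf : ∀ n x, f n x = x / 2 + 3 ^ n) :
    ∀ n k : ℕ, seqComp f k n 0 = ∑ i ∈ Finset.range n, 3 ^ (i + k) / 2 ^ i := by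
  intro n
  induction n with
  | zero => intro k; simp [seqComp]
  | succ n ih =>
      intro k
      rw [seqComp, ih (k + 1), hf, Finset.sum_range_succ',
        Finset.sum_div]
      norm_num
      congr 1
      funext x
      rw [show x + (k + 1) = x + 1 + k from by ring]
      ring

/-- The boundedness hypothesis in the non-stationary contraction principle
cannot be removed: `f n x = x/2 + 3^n` consists of `1/2`-contractions but
the orbit of `0` diverges. -/
theorem contraction_boundedness_needed :
    ∀ f : ℕ → ℝ → ℝ, (∀ n x, f n x = x / 2 + 3 ^ n) →
      (∀ n, LipschitzWith (1 / 2) (f n)) ∧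
      (∀ n : ℕ, seqComp f 1 n 0 = ∑ i ∈ Finset.range n, 3 ^ (i + 1) / 2 ^ i) ∧
      Tendsto (fun n => seqComp f 1 n 0) atTop atTop ∧
      ¬ ∃ L : ℝ, Tendsto (fun n => seqComp f 1 n 0) atTop (nhds L) := by
  intro f hf
  have hform : ∀ n : ℕ, seqComp f 1 n 0 = ∑ i ∈ Finset.range n, 3 ^ (i + 1) / 2 ^ i :=
    fun n => seqComp_formula f hf n 1
  have htop : Tendsto (fun n => seqComp f 1 n 0) atTop atTop := by
    apply tendsto_atTop_mono (f := fun n : ℕ => (3 : ℝ) * n)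
    · intro n
      rw [hform]
      calc (3 : ℝ) * n = ∑ _i ∈ Finset.range n, (3 : ℝ) := by
            simp [mul_comm]
        _ ≤ ∑ i ∈ Finset.range n, 3 ^ (i + 1) / 2 ^ i := by
            apply Finset.sum_le_sum
            intro i _
            rw [le_div_iff₀ (by positivity), pow_succ]
            have : (2 : ℝ) ^ i ≤ 3 ^ i := pow_le_pow_left₀ (by norm_num) (by norm_num) i
            nlinarith [pow_pos (show (0:ℝ) < 3 by norm_num) i]
    · exact tendsto_natCast_atTop_atTop.const_mul_atTop (by norm_num)
  refine ⟨?_, hform, htop, ?_⟩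
  · intro n
    have : f n = fun x => x / 2 + 3 ^ n := funext (hf n)
    rw [this]
    apply LipschitzWith.of_dist_le_mul
    intro x y
    simp only [Real.dist_eq, add_sub_add_right_eq_sub, div_sub_div_same, abs_div]
    rw [NNReal.coe_div]
    norm_num
    linarith [abs_nonneg (x - y)]
  · rintro ⟨L, hL⟩
    exact not_tendsto_nhds_of_tendsto_atTop htop L hL
end

section
/- Let X = Y = ℝ, f_n(x) = x/2, and h_n^x(y) = y/2 + 3^n for all x, n. Define F_n(x,y) = (f_n(x), h_n^x(y)). Then all Lipschitz constants equal 1/2 and f_n(0) = 0 is bounded, but the Y-coordinate of F_1∘⋯∘F_n(0,0) equals Σ_{i=1}^n 3^i/2^{i-1}, which tends to ∞; hence (F_1∘⋯∘F_n(0,0)) does not converge. -/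
open Filter
open scoped NNReal

lemma half_lip : LipschitzWith (1 / 2) (fun x : ℝ => x / 2) := by
  apply LipschitzWith.of_dist_le_mul
  intro x y
  simp [Real.dist_eq]
  rw [show x / 2 - y / 2 = (x - y) / 2 by ring, abs_div, abs_two]
  ring_nf
  simp

lemma key (f : ℕ → ℝ → ℝ) (hf : ∀ n x, f n x = x / 2)
    (h : ℕ → ℝ → ℝ → ℝ) (hh : ∀ n x y, h n x y = y / 2 + 3 ^ n)
    (F : ℕ → ℝ × ℝ → ℝ × ℝ) (hF : ∀ n p, F n p = (f n p.1, h n p.1 p.2)) :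
    ∀ n k : ℕ, seqComp F k n (0, 0) = (0, ∑ i ∈ Finset.range n, 3 ^ (k + i) / 2 ^ i) := by
  intro n
  induction n with
  | zero => intro k; simp [seqComp]
  | succ m ih =>
    intro k
    rw [seqComp, ih (k + 1), hF, hf, hh]
    simp only [Prod.mk.injEq]
    constructor
    · norm_num
    · rw [Finset.sum_range_succ', Finset.sum_div]
      congr 1
      · apply Finset.sum_congr rfl
        intro i _
        rw [pow_succ 2 i]
        ring_nf
      · simp

/-- The fiber boundedness condition cannot be removed from the non-stationary
fiber contraction theorem: with `f n x = x/2`, `h n x y = y/2 + 3^n`, all the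
maps are `1/2`-contractions and the base orbit of `0` is bounded, but the
skew orbit of `(0,0)` diverges. -/
theorem fiber_boundedness_needed
    (f : ℕ → ℝ → ℝ) (hf : ∀ n x, f n x = x / 2)
    (h : ℕ → ℝ → ℝ → ℝ) (hh : ∀ n x y, h n x y = y / 2 + 3 ^ n)
    (F : ℕ → ℝ × ℝ → ℝ × ℝ) (hF : ∀ n p, F n p = (f n p.1, h n p.1 p.2)) :
    (∀ n, LipschitzWith (1 / 2) (f n)) ∧
    (∀ n x, LipschitzWith (1 / 2) (h n x)) ∧
    (∀ n, f n 0 = 0) ∧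
    (∀ n : ℕ, (seqComp F 1 n (0, 0)).2 = ∑ i ∈ Finset.range n, 3 ^ (i + 1) / 2 ^ i) ∧
    Tendsto (fun n => (seqComp F 1 n (0, 0)).2) atTop atTop ∧
    ¬ ∃ z : ℝ × ℝ, Tendsto (fun n => seqComp F 1 n (0, 0)) atTop (nhds z) := by
  have hsum : ∀ n : ℕ, (seqComp F 1 n (0, 0)).2 = ∑ i ∈ Finset.range n, 3 ^ (i + 1) / 2 ^ i := by
    intro n
    rw [key f hf h hh F hF n 1]
    simp [add_comm]
  have htend : Tendsto (fun n => (seqComp F 1 n (0, 0)).2) atTop atTop := by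
    apply tendsto_atTop_mono (f := fun n : ℕ => (n : ℝ))
    · intro n
      rw [hsum n]
      calc (n : ℝ) = ∑ _i ∈ Finset.range n, (1:ℝ) := by simp
        _ ≤ _ := by
          apply Finset.sum_le_sum
          intro i _
          rw [le_div_iff₀ (by positivity)]
          calc (1:ℝ) * 2 ^ i = 2 ^ i := by ring
            _ ≤ 3 ^ i := by
              apply pow_le_pow_left₀ <;> norm_num
            _ ≤ 3 ^ (i + 1) := by
              apply pow_le_pow_right₀ <;> norm_num
    · exact tendsto_natCast_atTop_atTop
  refine ⟨?_, ?_, ?_, hsum, htend, ?_⟩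
  · intro n
    have : f n = fun x => x / 2 := funext (hf n)
    rw [this]; exact half_lip
  · intro n x
    have : h n x = fun y => y / 2 + 3 ^ n := funext (hh n x)
    rw [this]
    apply LipschitzWith.of_dist_le_mul
    intro a b
    simp only [Real.dist_eq]
    rw [show a / 2 + 3 ^ n - (b / 2 + 3 ^ n) = (a - b) / 2 by ring, abs_div, abs_two]
    ring_nf
    simp
  · intro n; rw [hf]; norm_num
  · rintro ⟨z, hz⟩
    have : Tendsto (fun n => (seqComp F 1 n (0, 0)).2) atTop (nhds z.2) :=
      (continuous_snd.tendsto z).comp hz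
    exact not_tendsto_atTop_of_tendsto_nhds this htend
end

section
/- Let X = Y = ℝ, f_n(x) = x/2 for all n, and h_n^x(y) = 0 if x = 0 and h_n^x(y) = (1/2)(y - 1/4) + 1/4 if x ≠ 0. Define F_n(x,y) = (f_n(x), h_n^x(y)). Then for every y ∈ ℝ: F_1∘⋯∘F_n(0,y) → (0,0) as n → ∞, while for every x ≠ 0, F_1∘⋯∘F_n(x,y) → (0, 1/4) as n → ∞. In particular the limit of F_1∘⋯∘F_n(x,y) depends on the initial point. -/
open Filter
open scoped NNReal

/-- The equicontinuity condition (3) cannot be removed from the non-stationary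
fiber contraction theorem: the limit may depend on the initial point. -/
theorem fiber_equicontinuity_needed
    (f : ℕ → ℝ → ℝ) (hf : ∀ n x, f n x = x / 2)
    (h : ℕ → ℝ → ℝ → ℝ)
    (hh : ∀ n x y, h n x y = if x = 0 then 0 else (y - 1 / 4) / 2 + 1 / 4)
    (F : ℕ → ℝ × ℝ → ℝ × ℝ) (hF : ∀ n p, F n p = (f n p.1, h n p.1 p.2)) :
    (∀ y : ℝ, Tendsto (fun n => seqComp F 1 n (0, y)) atTop (nhds ((0 : ℝ), (0 : ℝ)))) ∧
    ∀ x : ℝ, x ≠ 0 → ∀ y : ℝ,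
      Tendsto (fun n => seqComp F 1 n (x, y)) atTop (nhds ((0 : ℝ), (1 / 4 : ℝ))) := by
  have key0 : ∀ y : ℝ, ∀ k n, seqComp F k (n + 1) (0, y) = (0, 0) := by
    intro y k n
    induction n generalizing k with
    | zero => simp [seqComp, hF, hf, hh]
    | succ n ih =>
        show F k (seqComp F (k + 1) (n + 1) (0, y)) = (0, 0)
        rw [ih (k + 1), hF, hf, hh]; simp
  have key : ∀ x : ℝ, x ≠ 0 → ∀ y : ℝ, ∀ k n,
      seqComp F k n (x, y) = (x / 2 ^ n, 1 / 4 + (y - 1 / 4) / 2 ^ n) := by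
    intro x hx y k n
    induction n generalizing k with
    | zero => simp [seqComp]
    | succ n ih =>
        show F k (seqComp F (k + 1) n (x, y)) = _
        rw [ih (k + 1), hF, hf, hh]
        have : x / 2 ^ n ≠ 0 := by positivity
        simp only [this, if_false]
        rw [Prod.ext_iff]
        constructor <;> · simp only []; ring
  constructor
  · intro y
    have : Tendsto (fun _ : ℕ => ((0 : ℝ), (0 : ℝ))) atTop (nhds (0, 0)) :=
      tendsto_const_nhds
    refine this.congr' ?_
    filter_upwards [eventually_ge_atTop 1] with n hn
    obtain ⟨m, rfl⟩ := Nat.exists_eq_add_of_le hn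
    rw [Nat.add_comm, key0 y 1 m]
  · intro x hx y
    have h1 : Tendsto (fun n : ℕ => x / 2 ^ n) atTop (nhds 0) := by
      have := (tendsto_pow_atTop_nhds_zero_of_lt_one (le_of_lt one_half_pos)
        (by norm_num : (1 / 2 : ℝ) < 1)).const_mul x
      simpa [div_eq_mul_inv, ← inv_pow] using this
    have h2 : Tendsto (fun n : ℕ => 1 / 4 + (y - 1 / 4) / 2 ^ n) atTop (nhds (1 / 4)) := by
      have := (tendsto_pow_atTop_nhds_zero_of_lt_one (le_of_lt one_half_pos)
        (by norm_num : (1 / 2 : ℝ) < 1)).const_mul (y - 1 / 4)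
      have h3 : Tendsto (fun n : ℕ => (y - 1 / 4) / 2 ^ n) atTop (nhds 0) := by
        simpa [div_eq_mul_inv, ← inv_pow] using this
      simpa using h3.const_add (1 / 4 : ℝ)
    have := h1.prodMk_nhds h2
    refine this.congr ?_
    intro n
    rw [key x hx y 1 n]
end

section
/- Let X be a topological space, Y a complete metric space, f : X → X continuous, and {g_x}_{x∈X} a family of maps g_x : Y → Y such that F(x,y) := (f(x), g_x(y)) is continuous on X × Y. Suppose p ∈ X is a fixed point of f with f^n(x) → p for all x ∈ X, q ∈ Y is a fixed point of g_p, and limsup_{n→∞} Lip(g_{f^n(x)}) < 1 for all x ∈ X. Then (p,q) is a fixed point of F and F^n(x,y) → (p,q) for all (x,y) ∈ X × Y. -/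
open Filter
open scoped NNReal

private lemma tendsto_zero_of_rec (c : ℝ) (hc0 : 0 ≤ c) (hc1 : c < 1)
    (a e : ℕ → ℝ) (ha : ∀ n, 0 ≤ a n)
    (he : Tendsto e atTop (nhds 0))
    (hrec : ∀ᶠ n in atTop, a (n + 1) ≤ c * a n + e n) :
    Tendsto a atTop (nhds 0) := by
  rw [Metric.tendsto_atTop]
  intro ε hε
  have h1c : 0 < 1 - c := by linarith
  have hε2 : 0 < ε * (1 - c) / 2 := by positivity
  have he' : ∀ᶠ n in atTop, e n ≤ ε * (1 - c) / 2 := by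
    have := he.eventually (eventually_le_nhds hε2)
    simpa using this
  obtain ⟨M, hM⟩ := eventually_atTop.1 (he'.and hrec)
  have key : ∀ k, a (M + k) ≤ c ^ k * a M + ε / 2 := by
    intro k
    induction k with
    | zero => simp; linarith
    | succ k ih =>
      have h := hM (M + k) (by omega)
      have step : a (M + (k + 1)) ≤ c * a (M + k) + e (M + k) := h.2
      calc a (M + (k + 1)) ≤ c * a (M + k) + e (M + k) := step
        _ ≤ c * (c ^ k * a M + ε / 2) + ε * (1 - c) / 2 := by
            have h1 := h.1
            have h2 : c * a (M + k) ≤ c * (c ^ k * a M + ε / 2) :=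
              mul_le_mul_of_nonneg_left ih hc0
            linarith
        _ = c ^ (k + 1) * a M + (c * (ε / 2) + ε * (1 - c) / 2) := by ring
        _ ≤ c ^ (k + 1) * a M + ε / 2 := by nlinarith
  have hgeo : Tendsto (fun k => c ^ k * a M) atTop (nhds 0) := by
    simpa using (tendsto_pow_atTop_nhds_zero_of_lt_one hc0 hc1).mul_const (a M)
  obtain ⟨K, hK⟩ := Metric.tendsto_atTop.1 hgeo (ε / 2) (by linarith)
  refine ⟨M + K, fun n hn => ?_⟩
  have hk : n = M + (n - M) := by omega
  have h1 := key (n - M)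
  have h2 := hK (n - M) (by omega)
  rw [Real.dist_eq, sub_zero] at h2 ⊢
  rw [abs_of_nonneg (ha n)]
  have hpow : 0 ≤ c ^ (n - M) * a M := mul_nonneg (pow_nonneg hc0 _) (ha M)
  rw [abs_of_nonneg hpow] at h2
  rw [hk]
  linarith

/-- Hirsch–Pugh fiber contraction theorem.  The condition
`limsup_n Lip(g_{fⁿ(x)}) < 1` is phrased as: for each `x` there is a constant
`c < 1` such that eventually `g_{fⁿ(x)}` is `c`-Lipschitz. -/
theorem fiber_contraction_principle {X Y : Type*} [TopologicalSpace X]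
    [MetricSpace Y] [CompleteSpace Y]
    (f : X → X) (hf : Continuous f) (g : X → Y → Y)
    (F : X × Y → X × Y) (hFdef : ∀ p, F p = (f p.1, g p.1 p.2))
    (hF : Continuous F)
    (p : X) (hp : f p = p)
    (hattr : ∀ x : X, Tendsto (fun n => f^[n] x) atTop (nhds p))
    (q : Y) (hq : g p q = q)
    (hlip : ∀ x : X, ∃ c : ℝ≥0, c < 1 ∧
      ∀ᶠ n in atTop, LipschitzWith c (g (f^[n] x))) :
    F (p, q) = (p, q) ∧
    ∀ x : X, ∀ y : Y, Tendsto (fun n => F^[n] (x, y)) atTop (nhds (p, q)) := by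
  have hfix : F (p, q) = (p, q) := by rw [hFdef]; simp [hp, hq]
  refine ⟨hfix, fun x y => ?_⟩
  have hfst : ∀ n, (F^[n] (x, y)).1 = f^[n] x := by
    intro n
    induction n with
    | zero => rfl
    | succ n ih =>
      rw [Function.iterate_succ_apply', Function.iterate_succ_apply', hFdef, ih]
  have hsnd : ∀ n, (F^[n + 1] (x, y)).2 = g (f^[n] x) ((F^[n] (x, y)).2) := by
    intro n
    rw [Function.iterate_succ_apply', hFdef]
    simp [hfst]
  obtain ⟨c, hc1, hcev⟩ := hlip x
  set a : ℕ → ℝ := fun n => dist ((F^[n] (x, y)).2) q with ha_def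
  have hgq : Tendsto (fun n => g (f^[n] x) q) atTop (nhds q) := by
    have hcont : Continuous fun z : X => g z q := by
      have h : Continuous fun z : X => (F (z, q)).2 :=
        (hF.comp (continuous_id.prodMk continuous_const)).snd
      simpa [hFdef] using h
    have := hcont.continuousAt.tendsto.comp (hattr x)
    simpa [hq, Function.comp_def] using this
  have he : Tendsto (fun n => dist (g (f^[n] x) q) q) atTop (nhds 0) := by
    simpa using tendsto_iff_dist_tendsto_zero.1 hgq
  have hrec : ∀ᶠ n in atTop, a (n + 1) ≤ (c : ℝ) * a n + dist (g (f^[n] x) q) q := by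
    filter_upwards [hcev] with n hn
    have : a (n + 1) = dist (g (f^[n] x) ((F^[n] (x, y)).2)) q := by
      rw [ha_def]; simp only; rw [hsnd n]
    rw [this]
    calc dist (g (f^[n] x) ((F^[n] (x, y)).2)) q
        ≤ dist (g (f^[n] x) ((F^[n] (x, y)).2)) (g (f^[n] x) q) + dist (g (f^[n] x) q) q :=
          dist_triangle _ _ _
      _ ≤ (c : ℝ) * a n + dist (g (f^[n] x) q) q :=
          add_le_add_left (hn.dist_le_mul _ _) _
  have haz : Tendsto a atTop (nhds 0) :=
    tendsto_zero_of_rec (c : ℝ) c.coe_nonneg (by exact_mod_cast hc1) a _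
      (fun n => dist_nonneg) he hrec
  have h2 : Tendsto (fun n => (F^[n] (x, y)).2) atTop (nhds q) :=
    tendsto_iff_dist_tendsto_zero.2 haz
  have h1 : Tendsto (fun n => (F^[n] (x, y)).1) atTop (nhds p) := by
    simp only [hfst]; exact hattr x
  have := h1.prodMk_nhds h2
  simpa using this
end
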